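/- Under the mixing formula above, whenever θ√n ≠ 0 (and more generally unless the conditioning event has probability 1), the conditional distribution of Z_{(2)} given {Z₁ ≤ c₁} is not a normal distribution. -/

import Mathlib

open MeasureTheory ProbabilityTheory Real
open scoped NNReal ENNReal

lemma gauss_exp_key (μ : ℝ) {v : ℝ≥0} (hv : v ≠ 0) (t x : ℝ) :
    gaussianPDFReal μ v x * rexp (t * x)
      = rexp (t * μ + ↑v * t ^ 2 / 2) * gaussianPDFReal (μ + t * ↑v) v x := by
  have hv' : (0:ℝ) < (v:ℝ) := by positivity
  have hexp : -(x - μ) ^ 2 / (2 * ↑v) + t * x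
      = (t * μ + ↑v * t ^ 2 / 2) + -(x - (μ + t * ↑v)) ^ 2 / (2 * ↑v) := by
    field_simp
    ring
  unfold gaussianPDFReal
  calc (√(2 * π * ↑v))⁻¹ * rexp (-(x - μ) ^ 2 / (2 * ↑v)) * rexp (t * x)
      = (√(2 * π * ↑v))⁻¹ * rexp (-(x - μ) ^ 2 / (2 * ↑v) + t * x) := by
        rw [exp_add]; ring
    _ = rexp (t * μ + ↑v * t ^ 2 / 2) * ((√(2 * π * ↑v))⁻¹ * rexp (-(x - (μ + t * ↑v)) ^ 2 / (2 * ↑v))) := by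
        rw [hexp, exp_add]; ring

lemma gauss_density_rw (μ : ℝ) {v : ℝ≥0} (hv : v ≠ 0) :
    gaussianReal μ v
      = volume.withDensity (fun x => ((gaussianPDFReal μ v x).toNNReal : ℝ≥0∞)) := by
  rw [gaussianReal_of_var_ne_zero _ hv]; rfl

lemma integral_exp_gaussianReal (μ : ℝ) (v : ℝ≥0) (t : ℝ) :
    ∫ x, rexp (t * x) ∂(gaussianReal μ v) = rexp (t * μ + ↑v * t ^ 2 / 2) := by
  by_cases hv : v = 0
  · simp [hv, gaussianReal_zero_var, integral_dirac]
  rw [gauss_density_rw μ hv,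
    integral_withDensity_eq_integral_smul (measurable_gaussianPDFReal μ v).real_toNNReal]
  have h : ∀ x, (gaussianPDFReal μ v x).toNNReal • rexp (t * x)
      = rexp (t * μ + ↑v * t ^ 2 / 2) * gaussianPDFReal (μ + t * ↑v) v x := by
    intro x
    rw [NNReal.smul_def, Real.coe_toNNReal _ (gaussianPDFReal_nonneg μ v x)]
    exact gauss_exp_key μ hv t x
  simp_rw [h]
  rw [integral_const_mul, integral_gaussianPDFReal_eq_one _ hv, mul_one]

lemma integrable_exp_gaussianReal (μ : ℝ) (v : ℝ≥0) (t : ℝ) :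
    Integrable (fun x => rexp (t * x)) (gaussianReal μ v) := by
  by_cases hv : v = 0
  · rw [hv, gaussianReal_zero_var]
    refine ⟨(continuous_exp.comp (continuous_const.mul continuous_id)).aestronglyMeasurable, ?_⟩
    rw [HasFiniteIntegral, lintegral_dirac]
    exact ENNReal.coe_lt_top
  rw [gauss_density_rw μ hv,
    integrable_withDensity_iff_integrable_smul (measurable_gaussianPDFReal μ v).real_toNNReal]
  have h : ∀ x, (gaussianPDFReal μ v x).toNNReal • rexp (t * x)
      = rexp (t * μ + ↑v * t ^ 2 / 2) * gaussianPDFReal (μ + t * ↑v) v x := by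
    intro x
    rw [NNReal.smul_def, Real.coe_toNNReal _ (gaussianPDFReal_nonneg μ v x)]
    exact gauss_exp_key μ hv t x
  simp_rw [h]
  exact (integrable_gaussianPDFReal _ _).const_mul _

set_option maxHeartbeats 1000000 in
/-- Let `Z₁, Z₂` be independent `N(μ₀,1)` random variables and `c₁ ∈ ℝ` with
`0 < Pr(Z₁ ≤ c₁) < 1`. Then the law of the pooled statistic
`Z_{(2)} = (Z₁+Z₂)/√2` conditional on the continuation event `{Z₁ ≤ c₁}` is not
a normal distribution: it differs from every Gaussian law on `ℝ`. -/
theorem conditional_pooled_statistic_not_gaussian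
    {Ω : Type*} [MeasurableSpace Ω] (P : Measure Ω) [IsProbabilityMeasure P]
    (Z₁ Z₂ : Ω → ℝ) (hm₁ : Measurable Z₁) (hm₂ : Measurable Z₂)
    (μ₀ : ℝ)
    (hind : IndepFun Z₁ Z₂ P)
    (hZ₁ : Measure.map Z₁ P = gaussianReal μ₀ 1)
    (hZ₂ : Measure.map Z₂ P = gaussianReal μ₀ 1)
    (c₁ : ℝ) (hc_pos : 0 < P {ω | Z₁ ω ≤ c₁}) (hc_lt : P {ω | Z₁ ω ≤ c₁} < 1) :
    ∀ (m : ℝ) (v : NNReal),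
      Measure.map (fun ω => (Z₁ ω + Z₂ ω) / Real.sqrt 2)
          (P[|{ω | Z₁ ω ≤ c₁}]) ≠ gaussianReal m v := by
  intro m v hmap
  set A : Set Ω := {ω | Z₁ ω ≤ c₁} with hA_def
  have hA : MeasurableSet A := measurableSet_le hm₁ measurable_const
  set p : ℝ := (P A).toReal with hp_def
  have hp_pos : 0 < p := ENNReal.toReal_pos hc_pos.ne' (measure_ne_top P _)
  have hp_lt : p < 1 := by
    have := (ENNReal.toReal_lt_toReal (measure_ne_top P A) ENNReal.one_ne_top).2 hc_lt
    simpa using this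
  have h2pos : (0:ℝ) < √2 := Real.sqrt_pos.2 two_pos
  have hs2 : (√2 : ℝ) ^ 2 = 2 := Real.sq_sqrt two_pos.le
  set S : Ω → ℝ := fun ω => (Z₁ ω + Z₂ ω) / √2 with hS_def
  have hS : Measurable S := (hm₁.add hm₂).div_const _
  set φ : ℝ → ℝ → ℝ := fun s x => if x ≤ c₁ then rexp (s * x) else 0 with hφ_def
  have hφm : ∀ s, Measurable (φ s) := fun s =>
    Measurable.ite (measurableSet_le measurable_id measurable_const)
      ((measurable_id.const_mul s).exp) measurable_const
  set J : ℝ → ℝ := fun s => ∫ ω, φ s (Z₁ ω) ∂P with hJ_def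
  -- exp moments of Z₁, Z₂
  have hint : ∀ s : ℝ, Integrable (fun ω => rexp (s * Z₁ ω)) P := by
    intro s
    have h := integrable_exp_gaussianReal μ₀ 1 s
    rw [← hZ₁] at h
    exact (integrable_map_measure
      (continuous_exp.comp (continuous_const.mul continuous_id)).aestronglyMeasurable
      hm₁.aemeasurable).1 h
  have hmom : ∀ (W : Ω → ℝ), Measurable W → Measure.map W P = gaussianReal μ₀ 1 →
      ∀ s : ℝ, ∫ ω, rexp (s * W ω) ∂P = rexp (s * μ₀ + s ^ 2 / 2) := by
    intro W hW hlaw s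
    have hg : AEStronglyMeasurable (fun x : ℝ => rexp (s * x)) (Measure.map W P) :=
      (Continuous.aestronglyMeasurable (by fun_prop))
    rw [← integral_map hW.aemeasurable hg, hlaw, integral_exp_gaussianReal]
    norm_num
  -- main identity
  have hJ : ∀ s : ℝ, J s = p * rexp ((√2 * m - μ₀) * s + ((v : ℝ) - 1/2) * s ^ 2) := by
    intro s
    set t : ℝ := √2 * s with ht_def
    have step1 : ∫ x, rexp (t * x) ∂(gaussianReal m v) = rexp (t * m + ↑v * t ^ 2 / 2) :=
      integral_exp_gaussianReal m v t
    have hg : AEStronglyMeasurable (fun x : ℝ => rexp (t * x)) (Measure.map S (P[|A])) :=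
      (Continuous.aestronglyMeasurable (by fun_prop))
    rw [← hmap, integral_map hS.aemeasurable hg] at step1
    rw [ProbabilityTheory.cond, integral_smul_measure, ← integral_indicator hA] at step1
    have step5 : (fun ω => A.indicator (fun ω => rexp (t * S ω)) ω)
        = fun ω => φ s (Z₁ ω) * rexp (s * Z₂ ω) := by
      funext ω
      rw [Set.indicator_apply]
      by_cases h : Z₁ ω ≤ c₁
      · have hmem : ω ∈ A := h
        rw [if_pos hmem, hφ_def]
        simp only [if_pos h]
        rw [← exp_add]
        congr 1
        rw [hS_def, ht_def]
        field_simp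
      · have hmem : ω ∉ A := h
        rw [if_neg hmem, hφ_def]
        simp [h]
    rw [step5] at step1
    have step6 : ∫ ω, φ s (Z₁ ω) * rexp (s * Z₂ ω) ∂P
        = (∫ ω, φ s (Z₁ ω) ∂P) * ∫ ω, rexp (s * Z₂ ω) ∂P := by
      exact (hind.comp (hφm s) ((measurable_id.const_mul s).exp)).integral_mul_eq_mul_integral
        ((hφm s).comp hm₁).aestronglyMeasurable
        ((hm₂.const_mul s).exp).aestronglyMeasurable
    rw [step6, hmom Z₂ hm₂ hZ₂ s] at step1
    -- step1 : rexp (t*m + v*t^2/2) = ((P A)⁻¹).toReal • (J s * rexp (s*μ₀+s^2/2))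
    have hPAinv : ((P A)⁻¹).toReal = p⁻¹ := by rw [ENNReal.toReal_inv]
    rw [hPAinv, smul_eq_mul] at step1
    have hexp_pos := Real.exp_pos (s * μ₀ + s ^ 2 / 2)
    have : J s = p * (rexp (t * m + ↑v * t ^ 2 / 2) / rexp (s * μ₀ + s ^ 2 / 2)) := by
      field_simp at step1 ⊢
      linarith [step1]
    rw [this, ← Real.exp_sub]
    congr 2
    have ht2 : t ^ 2 = 2 * s ^ 2 := by rw [ht_def, mul_pow, hs2]
    rw [ht_def, ht2]
    ring
  -- upper bound for s ≥ 0
  have hUB : ∀ s : ℝ, 0 ≤ s → J s ≤ rexp (s * c₁) := by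
    intro s hs
    have hbound : ∀ ω, φ s (Z₁ ω) ≤ rexp (s * c₁) := by
      intro ω
      rw [hφ_def]
      by_cases h : Z₁ ω ≤ c₁
      · simp only [if_pos h]
        exact Real.exp_le_exp.2 (mul_le_mul_of_nonneg_left h hs)
      · simp only [if_neg h]
        exact (Real.exp_pos _).le
    have hnn : ∀ ω, 0 ≤ φ s (Z₁ ω) := by
      intro ω
      rw [hφ_def]
      by_cases h : Z₁ ω ≤ c₁ <;> simp [h, (Real.exp_pos _).le]
    have hint' : Integrable (fun ω => φ s (Z₁ ω)) P := by
      refine Integrable.mono' (integrable_const (rexp (s * c₁)))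
        ((hφm s).comp hm₁).aestronglyMeasurable (ae_of_all _ fun ω => ?_)
      rw [Real.norm_eq_abs, abs_of_nonneg (hnn ω)]
      exact hbound ω
    calc J s ≤ ∫ _ω, rexp (s * c₁) ∂P := integral_mono hint' (integrable_const _) hbound
      _ = rexp (s * c₁) := by simp
  -- lower bound for s ≤ 0
  have hLB : ∀ s : ℝ, s ≤ 0 → rexp (s * μ₀ + s ^ 2 / 2) - rexp (s * c₁) ≤ J s := by
    intro s hs
    set ψ : Ω → ℝ := fun ω => if c₁ < Z₁ ω then rexp (s * Z₁ ω) else 0 with hψ_def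
    have hψm : Measurable ψ :=
      Measurable.ite (measurableSet_lt measurable_const hm₁) (hm₁.const_mul s).exp
        measurable_const
    have hψint : Integrable ψ P := by
      refine Integrable.mono' (hint s) hψm.aestronglyMeasurable (ae_of_all _ fun ω => ?_)
      rw [hψ_def]
      by_cases h : c₁ < Z₁ ω <;> simp [h, Real.norm_eq_abs, abs_of_nonneg, (Real.exp_pos _).le, Real.exp_le_exp]
    have hsplit : (fun ω => φ s (Z₁ ω)) = fun ω => rexp (s * Z₁ ω) - ψ ω := by
      funext ω
      rw [hφ_def, hψ_def]
      by_cases h : Z₁ ω ≤ c₁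
      · simp [h, not_lt.2 h]
      · simp [h, not_le.1 h]
    have hJs : J s = rexp (s * μ₀ + s ^ 2 / 2) - ∫ ω, ψ ω ∂P := by
      rw [hJ_def]
      simp only []
      rw [hsplit, integral_sub (hint s) hψint, hmom Z₁ hm₁ hZ₁ s]
    have hψle : ∫ ω, ψ ω ∂P ≤ rexp (s * c₁) := by
      have hb : ∀ ω, ψ ω ≤ rexp (s * c₁) := by
        intro ω
        rw [hψ_def]
        by_cases h : c₁ < Z₁ ω
        · simp only [if_pos h]
          exact Real.exp_le_exp.2 (mul_le_mul_of_nonpos_left h.le hs)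
        · simp only [if_neg h]
          exact (Real.exp_pos _).le
      calc ∫ ω, ψ ω ∂P ≤ ∫ _ω, rexp (s * c₁) ∂P := integral_mono hψint (integrable_const _) hb
        _ = rexp (s * c₁) := by simp
    rw [hJs]
    linarith
  -- now the contradiction
  set a : ℝ := √2 * m - μ₀ with ha_def
  set b : ℝ := (v : ℝ) - 1/2 with hb_def
  have hlogJ : ∀ s : ℝ, Real.log p + (a * s + b * s ^ 2) = Real.log (J s) := by
    intro s
    rw [hJ s, Real.log_mul hp_pos.ne' (Real.exp_pos _).ne', Real.log_exp]
  -- b ≤ 0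
  have hb_le : b ≤ 0 := by
    by_contra hb
    push_neg at hb
    set s : ℝ := max 1 ((|c₁ - a| + |Real.log p| + 1) / b) with hs_def
    have hs1 : (1:ℝ) ≤ s := le_max_left _ _
    have hs0 : (0:ℝ) ≤ s := by linarith
    have hbs : |c₁ - a| + |Real.log p| + 1 ≤ b * s := by
      have h := le_max_right 1 ((|c₁ - a| + |Real.log p| + 1) / b)
      rw [div_le_iff₀ hb] at h
      calc |c₁ - a| + |Real.log p| + 1 ≤ (max 1 ((|c₁ - a| + |Real.log p| + 1) / b)) * b := h
        _ = b * s := mul_comm _ b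
    have hkey : Real.log p + (a * s + b * s ^ 2) ≤ s * c₁ := by
      have h1 : p * rexp (a * s + b * s ^ 2) ≤ rexp (s * c₁) := by
        rw [← hJ s]; exact hUB s hs0
      have h2 : rexp (Real.log p + (a * s + b * s ^ 2)) ≤ rexp (s * c₁) := by
        rw [Real.exp_add, Real.exp_log hp_pos]; exact h1
      exact Real.exp_le_exp.1 h2
    nlinarith [neg_abs_le (Real.log p),
      mul_le_mul_of_nonneg_right hbs hs0,
      mul_le_mul_of_nonneg_right (le_abs_self (c₁ - a)) hs0,
      mul_le_mul_of_nonneg_left hs1 (abs_nonneg (Real.log p))]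
  -- final contradiction using s very negative
  have hM2 : (2:ℝ) ≤ max 2 (2 * (|a - μ₀| + |c₁ - μ₀| + 1)) := le_max_left _ _
  have hMb : 2 * (|a - μ₀| + |c₁ - μ₀| + 1) ≤ max 2 (2 * (|a - μ₀| + |c₁ - μ₀| + 1)) :=
    le_max_right _ _
  set M : ℝ := max 2 (2 * (|a - μ₀| + |c₁ - μ₀| + 1)) with hM_def
  have hM0 : (0:ℝ) < M := by linarith
  have hnum : |a - μ₀| + |c₁ - μ₀| + 1 ≤ M / 2 := by linarith
  have h9 : M * (|a - μ₀| + |c₁ - μ₀| + 1) ≤ M ^ 2 / 2 := by nlinarith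
  have h10 : M * (-|a - μ₀|) ≤ M * (a - μ₀) := mul_le_mul_of_nonneg_left (neg_abs_le _) hM0.le
  have h11 : M * (-|c₁ - μ₀|) ≤ M * (c₁ - μ₀) := mul_le_mul_of_nonneg_left (neg_abs_le _) hM0.le
  have claim1 : a * (-M) + 1 ≤ (-M) * μ₀ + (-M) ^ 2 / 2 := by nlinarith [abs_nonneg (c₁ - μ₀)]
  have claim2 : (-M) * c₁ + 1 ≤ (-M) * μ₀ + (-M) ^ 2 / 2 := by nlinarith [abs_nonneg (a - μ₀)]
  have hlow : rexp ((-M) * μ₀ + (-M) ^ 2 / 2) - rexp ((-M) * c₁)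
      ≤ p * rexp (a * (-M) + b * (-M) ^ 2) := by
    rw [← hJ (-M)]; exact hLB (-M) (by linarith)
  have h3 : p * rexp (a * (-M) + b * (-M) ^ 2) ≤ rexp (a * (-M)) := by
    have h4 : rexp (a * (-M) + b * (-M) ^ 2) ≤ rexp (a * (-M)) := by
      apply Real.exp_le_exp.2
      nlinarith [sq_nonneg M]
    calc p * rexp (a * (-M) + b * (-M) ^ 2) ≤ 1 * rexp (a * (-M)) :=
          mul_le_mul hp_lt.le h4 (Real.exp_pos _).le zero_le_one
      _ = rexp (a * (-M)) := one_mul _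
  have h5 : rexp (a * (-M)) ≤ rexp (((-M) * μ₀ + (-M) ^ 2 / 2) - 1) :=
    Real.exp_le_exp.2 (by linarith)
  have h6 : rexp ((-M) * c₁) ≤ rexp (((-M) * μ₀ + (-M) ^ 2 / 2) - 1) :=
    Real.exp_le_exp.2 (by linarith)
  have h8 : 2 * rexp (((-M) * μ₀ + (-M) ^ 2 / 2) - 1) < rexp ((-M) * μ₀ + (-M) ^ 2 / 2) := by
    have e1 : (2:ℝ) < rexp 1 := by
      have := Real.exp_one_gt_d9
      norm_num at this ⊢
      linarith
    calc 2 * rexp (((-M) * μ₀ + (-M) ^ 2 / 2) - 1)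
        < rexp 1 * rexp (((-M) * μ₀ + (-M) ^ 2 / 2) - 1) :=
          mul_lt_mul_of_pos_right e1 (Real.exp_pos _)
      _ = rexp ((-M) * μ₀ + (-M) ^ 2 / 2) := by rw [← Real.exp_add]; ring_nf
  linarith
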